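/- Let n ≥ 1, let s : ℝⁿ → ℝ be C^∞, and suppose there is a C^∞ function A₀ : ℝⁿ → ℝ such that ‖∇s(x)‖² = 1 + s(x) · A₀(x) for all x (s is a normal defining function). Then for every integer m ≥ 1 there exist C^∞ functions w and A_m on ℝⁿ such that the function s̄(x) := s(x) · (1 + s(x) · w(x)) satisfies ‖∇s̄(x)‖² = 1 + s(x)^m · A_m(x) for all x. -/

import Mathlib

open InnerProductSpace

variable {F : Type*} [NormedAddCommGroup F] [InnerProductSpace ℝ F] [CompleteSpace F]

local notation "⟪" x ", " y "⟫" => @inner ℝ _ _ x y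

lemma my_gradient_mul {f g : F → ℝ} {x : F} (hf : DifferentiableAt ℝ f x)
    (hg : DifferentiableAt ℝ g x) :
    gradient (fun z => f z * g z) x = f x • gradient g x + g x • gradient f x := by
  unfold gradient
  rw [fderiv_fun_mul hf hg, map_add, map_smul, map_smul]

lemma my_gradient_add {f g : F → ℝ} {x : F} (hf : DifferentiableAt ℝ f x)
    (hg : DifferentiableAt ℝ g x) :
    gradient (fun z => f z + g z) x = gradient f x + gradient g x := by
  unfold gradient
  rw [fderiv_fun_add hf hg, map_add]

lemma my_gradient_const_add {f : F → ℝ} {x : F} (c : ℝ) :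
    gradient (fun z => c + f z) x = gradient f x := by
  unfold gradient
  rw [fderiv_const_add]

lemma my_contDiff_gradient {f : F → ℝ} (hf : ContDiff ℝ (⊤ : ℕ∞) f) :
    ContDiff ℝ (⊤ : ℕ∞) (gradient f) := by
  have h1 : ContDiff ℝ (⊤ : ℕ∞) (fderiv ℝ f) := hf.fderiv_right (le_of_eq (by rfl))
  exact (InnerProductSpace.toDual ℝ F).symm.contDiff.comp h1

lemma my_gradient_pow {s : F → ℝ} (hs : Differentiable ℝ s) (p : ℕ) (x : F) :
    gradient (fun z => s z ^ (p + 1)) x = (((p : ℝ) + 1) * s x ^ p) • gradient s x := by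
  induction p with
  | zero =>
    have : (fun z => s z ^ (0 + 1)) = s := by funext z; ring
    rw [this]; simp
  | succ p ih =>
    have h1 : (fun z => s z ^ (p + 1 + 1)) = fun z => s z ^ (p + 1) * s z := by
      funext z; ring
    rw [h1, my_gradient_mul (f := fun z => s z ^ (p + 1)) ((hs x).pow (p + 1)) (hs x), ih, smul_smul, ← add_smul]
    congr 1
    push_cast
    ring

lemma key_step (s A₀ : F → ℝ) (hs : ContDiff ℝ (⊤ : ℕ∞) s) (hA₀ : ContDiff ℝ (⊤ : ℕ∞) A₀)
    (h : ∀ x, ‖gradient s x‖ ^ 2 = 1 + s x * A₀ x) :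
    ∀ k : ℕ, ∃ W A : F → ℝ,
      ContDiff ℝ (⊤ : ℕ∞) W ∧ ContDiff ℝ (⊤ : ℕ∞) A ∧
      ∀ x, ‖gradient (fun z => s z * (1 + s z * W z)) x‖ ^ 2 = 1 + s x ^ (k + 1) * A x := by
  have hsd : Differentiable ℝ s := hs.differentiable (by simp)
  intro k
  induction k with
  | zero =>
    refine ⟨fun _ => 0, A₀, contDiff_const, hA₀, fun x => ?_⟩
    have he : (fun z => s z * (1 + s z * 0)) = s := by funext z; ring
    rw [he, pow_one]
    exact h x
  | succ k ih =>
    obtain ⟨W, A, hW, hA, hWA⟩ := ih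
    -- correction term
    set w : F → ℝ := fun x => -(A x) / (2 * (k + 2)) with hw_def
    have hw : ContDiff ℝ (⊤ : ℕ∞) w := (hA.neg).div_const _
    have hwd : Differentiable ℝ w := hw.differentiable (by simp)
    have hWd : Differentiable ℝ W := hW.differentiable (by simp)
    -- old function
    set sb : F → ℝ := fun z => s z * (1 + s z * W z) with hsb_def
    have hsb : ContDiff ℝ (⊤ : ℕ∞) sb := hs.mul (contDiff_const.add (hs.mul hW))
    have hsbd : Differentiable ℝ sb := hsb.differentiable (by simp)
    -- vector field v
    set v : F → F := fun x => (((k : ℝ) + 2) * w x) • gradient s x + s x • gradient w x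
      with hv_def
    have hv : ContDiff ℝ (⊤ : ℕ∞) v :=
      ((contDiff_const.mul hw).smul (my_contDiff_gradient hs)).add
        (hs.smul (my_contDiff_gradient hw))
    -- B
    set B : F → ℝ := fun x => A₀ x + 2 * W x + 2 * s x * W x * A₀ x +
      s x * ⟪gradient W x, gradient s x⟫ with hB_def
    have hB : ContDiff ℝ (⊤ : ℕ∞) B := by
      refine (((hA₀.add (contDiff_const.mul hW)).add
        (((contDiff_const.mul hs).mul hW).mul hA₀)).add
        (hs.mul ?_))
      exact (my_contDiff_gradient hW).inner ℝ (my_contDiff_gradient hs)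
    -- new A
    set A' : F → ℝ := fun x => -(A x * B x) + 2 * ⟪gradient sb x, gradient w x⟫ +
      s x ^ k * ‖v x‖ ^ 2 with hA'_def
    have hA' : ContDiff ℝ (⊤ : ℕ∞) A' := by
      refine ((hA.mul hB).neg.add (contDiff_const.mul ?_)).add ((hs.pow k).mul ?_)
      · exact (my_contDiff_gradient hsb).inner ℝ (my_contDiff_gradient hw)
      · exact hv.norm_sq ℝ
    refine ⟨fun x => W x + s x ^ k * w x, A', hW.add ((hs.pow k).mul hw), hA', fun x => ?_⟩
    -- the new function equals sb + s^{k+2} * w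
    have hfe : (fun z => s z * (1 + s z * (W z + s z ^ k * w z)))
        = fun z => sb z + s z ^ (k + 2) * w z := by
      funext z; simp only [hsb_def]; ring
    rw [hfe]
    -- gradient of sb
    have hgsb : gradient sb x = (1 + s x * W x) • gradient s x +
        s x • (s x • gradient W x + W x • gradient s x) := by
      rw [hsb_def]
      rw [my_gradient_mul (g := fun z => 1 + s z * W z) (hsd x) ((differentiableAt_const 1).add ((hsd x).mul (hWd x)))]
      rw [show (fun z => 1 + s z * W z) = (fun z => (1:ℝ) + (fun y => s y * W y) z) from rfl]
      rw [my_gradient_const_add, my_gradient_mul (hsd x) (hWd x)]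
      rw [add_comm]
    -- E3 : inner of grad sb with grad s
    have hE3 : ⟪gradient sb x, gradient s x⟫ = 1 + s x * B x := by
      rw [hgsb, hB_def]
      simp only [inner_add_left, real_inner_smul_left, real_inner_self_eq_norm_sq]
      rw [h x]
      ring
    -- gradient of the power term
    have hgp : gradient (fun z => s z ^ (k + 2) * w z) x = s x ^ (k + 1) • v x := by
      rw [my_gradient_mul (f := fun z => s z ^ (k + 2)) ((hsd x).pow (k + 2)) (hwd x)]
      rw [show (fun z => s z ^ (k + 2)) = (fun z => s z ^ (k + 1 + 1)) from rfl]
      rw [my_gradient_pow hsd (k + 1) x]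
      rw [hv_def]
      simp only [smul_add, smul_smul, ← add_smul]
      rw [add_comm]
      congr 2 <;> push_cast <;> ring
    -- gradient of the sum
    have hgf : gradient (fun z => sb z + s z ^ (k + 2) * w z) x
        = gradient sb x + s x ^ (k + 1) • v x := by
      rw [my_gradient_add (g := fun z => s z ^ (k + 2) * w z) (hsbd x) (((hsd x).pow (k + 2)).mul (hwd x)), hgp]
    rw [hgf]
    -- expand the square norm
    rw [norm_add_sq_real]
    rw [real_inner_smul_right, norm_smul]
    have hvin : ⟪gradient sb x, v x⟫ = (((k : ℝ) + 2) * w x) * (1 + s x * B x) +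
        s x * ⟪gradient sb x, gradient w x⟫ := by
      rw [hv_def]
      rw [inner_add_right, real_inner_smul_right, real_inner_smul_right, hE3]
    rw [hvin, hWA x]
    have hw2 : 2 * ((k : ℝ) + 2) * w x = -(A x) := by
      rw [hw_def]
      field_simp
    rw [hA'_def]
    rw [mul_pow, Real.norm_eq_abs, sq_abs]
    linear_combination (s x ^ (k + 1) + s x ^ (k + 2) * B x) * hw2

/-- Flat-background instance of Proposition 2.6: if `s : ℝⁿ → ℝ` is a smooth normal defining
function (`‖∇s‖² = 1 + s·A₀` with `A₀` smooth), then for every `m ≥ 1` there are smooth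
functions `w` and `Aₘ` such that `s̄ := s·(1 + s·w)` satisfies `‖∇s̄‖² = 1 + sᵐ·Aₘ`. -/
theorem unit_defining_function_all_orders
    (n : ℕ) (hn : 1 ≤ n) (s A₀ : EuclideanSpace ℝ (Fin n) → ℝ)
    (hs : ContDiff ℝ (⊤ : ℕ∞) s) (hA₀ : ContDiff ℝ (⊤ : ℕ∞) A₀)
    (h : ∀ x, ‖gradient s x‖ ^ 2 = 1 + s x * A₀ x)
    (m : ℕ) (hm : 1 ≤ m) :
    ∃ w Am : EuclideanSpace ℝ (Fin n) → ℝ,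
      ContDiff ℝ (⊤ : ℕ∞) w ∧ ContDiff ℝ (⊤ : ℕ∞) Am ∧
      ∀ x, ‖gradient (fun z => s z * (1 + s z * w z)) x‖ ^ 2 = 1 + s x ^ m * Am x := by
  obtain ⟨k, rfl⟩ := Nat.exists_eq_add_of_le hm
  simpa [add_comm] using key_step s A₀ hs hA₀ h k
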